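/- Suppose Y and C are independent and the law of C is atomless. Then for every y ∈ ℝ with ℙ(Y > y) > 0 and ℙ(C > y) > 0, the function γ₀ appearing in the asymptotic representation of Kaplan–Meier integrals is identified as the inverse censoring survival probability: exp(∫_{(-∞,y]} (ℙ(Q > s))⁻¹ dν₀(s)) = (ℙ(C > y))⁻¹; equivalently, ∫_{(-∞,y]} (ℙ(Q > s))⁻¹ dν₀(s) = −log ℙ(C > y). -/

import Mathlib

open MeasureTheory ProbabilityTheory Set Filter
open scoped ENNReal

/-- Measure of a sublevel set of the cdf. -/
lemma measure_cdf_le_aux (μ : Measure ℝ) [IsProbabilityMeasure μ]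
    (hatom : ∀ c : ℝ, μ {c} = 0) {u : ℝ} (h0 : 0 ≤ u) (h1 : u < 1)
    (hA : {s : ℝ | cdf μ s ≤ u}.Nonempty) :
    μ {s : ℝ | cdf μ s ≤ u} = ENNReal.ofReal u := by
  set F : ℝ → ℝ := fun s => cdf μ s with hF
  set A : Set ℝ := {s : ℝ | cdf μ s ≤ u} with hAdef
  have hmono : Monotone F := (cdf μ).mono
  -- A is bounded above
  obtain ⟨s₀, hs₀⟩ : ∃ s₀, u < F s₀ := by
    have := (tendsto_cdf_atTop μ).eventually (eventually_gt_nhds h1)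
    exact this.exists
  have hbdd : BddAbove A := ⟨s₀, fun s hs => by
    by_contra h
    push_neg at h
    exact absurd (hmono h.le) (by simp only [hAdef, mem_setOf_eq] at hs; linarith)⟩
  set t := sSup A with ht
  have hIio : Iio t ⊆ A := by
    intro s hs
    obtain ⟨s', hs', hss'⟩ := exists_lt_of_lt_csSup hA hs
    exact le_trans (hmono hss'.le) hs'
  have hIic : A ⊆ Iic t := fun s hs => le_csSup hbdd hs
  -- μ (Iio t) ≤ ofReal u
  have hIio_le : μ (Iio t) ≤ ENNReal.ofReal u := by
    have hUnion : Iio t = ⋃ n : ℕ, Iic (t - 1 / (n + 1)) := by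
      ext s
      simp only [mem_Iio, mem_iUnion, mem_Iic]
      constructor
      · intro hs
        obtain ⟨n, hn⟩ := exists_nat_one_div_lt (sub_pos.mpr hs)
        exact ⟨n, by linarith⟩
      · rintro ⟨n, hn⟩
        have : (0:ℝ) < 1 / (n + 1) := by positivity
        linarith
    rw [hUnion, Directed.measure_iUnion]
    · refine iSup_le fun n => ?_
      have hpos : (0:ℝ) < 1 / (n + 1) := by positivity
      have hmem : t - 1 / (n + 1) ∈ A := hIio (by simp [mem_Iio]; linarith)
      calc μ (Iic (t - 1 / (n+1))) = ENNReal.ofReal (F (t - 1/(n+1))) := (ofReal_cdf (μ := μ) _).symm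
        _ ≤ ENNReal.ofReal u := ENNReal.ofReal_le_ofReal hmem
    · refine Monotone.directed_le fun m n hmn => Iic_subset_Iic.mpr ?_
      have : (1:ℝ) / (n + 1) ≤ 1 / (m + 1) := by
        apply one_div_le_one_div_of_le (by positivity)
        have := (Nat.cast_le (α := ℝ)).mpr hmn; linarith
      linarith
  have hIic_eq : μ (Iic t) = μ (Iio t) := by
    rw [← Iio_union_right]
    exact le_antisymm ((measure_union_le _ _).trans (by simp [hatom t])) (measure_mono subset_union_left)
  -- F t ≥ u from right continuity
  have hFt_ge : u ≤ F t := by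
    have htend : Tendsto F (nhdsWithin t (Ioi t)) (nhds (F t)) :=
      ((cdf μ).right_continuous t).tendsto.mono_left (nhdsWithin_mono _ Ioi_subset_Ici_self)
    refine ge_of_tendsto htend ?_
    filter_upwards [self_mem_nhdsWithin] with s hs
    by_contra h
    push_neg at h
    exact absurd (le_csSup hbdd (show s ∈ A from h.le)) (not_le.mpr hs)
  -- μ A squeeze
  have h1' : μ A ≤ ENNReal.ofReal u := le_trans (measure_mono hIic) (hIic_eq ▸ hIio_le)
  have h2' : ENNReal.ofReal u ≤ μ A := by
    calc ENNReal.ofReal u ≤ ENNReal.ofReal (F t) := ENNReal.ofReal_le_ofReal hFt_ge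
      _ = μ (Iic t) := ofReal_cdf (μ := μ) t
      _ = μ (Iio t) := hIic_eq
      _ ≤ μ A := measure_mono hIio
  exact le_antisymm h1' h2'

lemma map_cdf_eq_uniform (μ : Measure ℝ) [IsProbabilityMeasure μ]
    (hatom : ∀ c : ℝ, μ {c} = 0) :
    Measure.map (fun s => cdf μ s) μ = volume.restrict (Ioo 0 1) := by
  have hmeas : Measurable fun s => cdf μ s := (cdf μ).mono.measurable
  have : IsProbabilityMeasure (Measure.map (fun s => cdf μ s) μ) :=
    Measure.isProbabilityMeasure_map hmeas.aemeasurable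
  have hfin : IsFiniteMeasure (volume.restrict (Ioo (0:ℝ) 1)) :=
    ⟨by simp [Real.volume_Ioo]⟩
  refine Measure.ext_of_Iic _ _ fun u => ?_
  rw [Measure.map_apply hmeas measurableSet_Iic]
  have hpre : (fun s => cdf μ s) ⁻¹' Iic u = {s : ℝ | cdf μ s ≤ u} := rfl
  rw [hpre, Measure.restrict_apply measurableSet_Iic]
  rcases lt_or_ge u 0 with hu | hu
  · have : {s : ℝ | cdf μ s ≤ u} = ∅ := by
      ext s; simp only [mem_setOf_eq, mem_empty_iff_false, iff_false, not_le]
      exact lt_of_lt_of_le hu (cdf_nonneg (μ := μ) s)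
    rw [this]
    have : Iic u ∩ Ioo (0:ℝ) 1 = ∅ := by
      ext x; simp only [mem_inter_iff, mem_Iic, mem_Ioo, mem_empty_iff_false, iff_false]
      rintro ⟨h1, h2, _⟩; linarith
    simp [this]
  rcases lt_or_ge u 1 with hu1 | hu1
  · have hset : Iic u ∩ Ioo (0:ℝ) 1 = Ioc 0 u := by
      ext x; simp only [mem_inter_iff, mem_Iic, mem_Ioo, mem_Ioc]
      constructor
      · rintro ⟨h1, h2, _⟩; exact ⟨h2, h1⟩
      · rintro ⟨h1, h2⟩; exact ⟨h2, h1, lt_of_le_of_lt h2 hu1⟩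
    rw [hset, Real.volume_Ioc, sub_zero]
    by_cases hA : {s : ℝ | cdf μ s ≤ u}.Nonempty
    · exact measure_cdf_le_aux μ hatom hu hu1 hA
    · -- empty: then u must be 0 (since for u > 0 the set is nonempty)
      rw [not_nonempty_iff_eq_empty] at hA
      rw [hA]
      rcases eq_or_lt_of_le hu with h | h
      · simp [← h]
      · exfalso
        have := (tendsto_cdf_atBot μ).eventually (eventually_lt_nhds h)
        obtain ⟨s, hs⟩ := this.exists
        exact absurd (hA ▸ hs.le : s ∈ (∅ : Set ℝ)) (by simp)
  · have hset1 : {s : ℝ | cdf μ s ≤ u} = univ := by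
      ext s; simp only [mem_setOf_eq, mem_univ, iff_true]
      exact le_trans (cdf_le_one (μ := μ) s) hu1
    have hset2 : Iic u ∩ Ioo (0:ℝ) 1 = Ioo 0 1 := by
      ext x; simp only [mem_inter_iff, mem_Iic, mem_Ioo]
      exact ⟨fun h => h.2, fun h => ⟨le_of_lt (lt_of_lt_of_le h.2 hu1), h⟩⟩
    rw [hset1, hset2]
    simp [Real.volume_Ioo, measure_univ]

-- elementary interval integral
lemma lintegral_unif_aux {c : ℝ} (h0 : 0 ≤ c) (h1 : c < 1) :
    ∫⁻ u in Ioc (0:ℝ) c, (ENNReal.ofReal (1 - u))⁻¹ = ENNReal.ofReal (-Real.log (1 - c)) := by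
  have hcongr : ∀ u ∈ Ioc (0:ℝ) c, (ENNReal.ofReal (1 - u))⁻¹ = ENNReal.ofReal ((1 - u)⁻¹) := by
    intro u hu
    rw [ENNReal.ofReal_inv_of_pos (by simp only [mem_Ioc] at hu; linarith)]
  rw [setLIntegral_congr_fun measurableSet_Ioc hcongr]
  have hcont : ContinuousOn (fun u : ℝ => (1 - u)⁻¹) (Icc 0 c) := by
    apply ContinuousOn.inv₀ (by fun_prop)
    intro x hx
    simp only [mem_Icc] at hx; intro h; linarith [hx.2]
  have hint : IntegrableOn (fun u : ℝ => (1 - u)⁻¹) (Ioc 0 c) volume :=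
    (hcont.integrableOn_Icc).mono_set Ioc_subset_Icc_self
  have hnn : 0 ≤ᵐ[volume.restrict (Ioc (0:ℝ) c)] fun u : ℝ => (1 - u)⁻¹ := by
    refine (ae_restrict_iff' measurableSet_Ioc).mpr (Filter.Eventually.of_forall ?_)
    intro u hu
    simp only [mem_Ioc] at hu
    have : (0:ℝ) < 1 - u := by linarith
    positivity
  rw [← ofReal_integral_eq_lintegral_ofReal hint hnn]
  congr 1
  have h1' : ∫ u in Ioc (0:ℝ) c, (1 - u)⁻¹ = ∫ u in (0:ℝ)..c, (1 - u)⁻¹ :=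
    (intervalIntegral.integral_of_le h0).symm
  rw [h1']
  have h2' : ∫ u in (0:ℝ)..c, (1 - u)⁻¹ = ∫ x in (1 - c)..(1:ℝ), x⁻¹ := by
    simpa using intervalIntegral.integral_comp_sub_left (a := (0:ℝ)) (b := c) (fun x : ℝ => x⁻¹) 1
  rw [h2', integral_inv]
  · rw [Real.log_div one_ne_zero (by linarith), Real.log_one, zero_sub]
  · rw [Set.uIcc_of_le (by linarith : (1:ℝ) - c ≤ 1)]
    simp only [mem_Icc, not_and, not_le]
    intro h
    linarith

lemma lintegral_inv_survival (μ : Measure ℝ) [IsProbabilityMeasure μ]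
    (hatom : ∀ c : ℝ, μ {c} = 0) (y : ℝ) (hy : 0 < μ (Ioi y)) :
    ∫⁻ s in Iic y, (μ (Ioi s))⁻¹ ∂μ = ENNReal.ofReal (-Real.log (μ (Ioi y)).toReal) := by
  set F : ℝ → ℝ := fun s => cdf μ s with hFdef
  have hmeas : Measurable F := (cdf μ).mono.measurable
  -- μ (Ioi s) = ofReal (1 - F s)
  have hIoi : ∀ s, μ (Ioi s) = ENNReal.ofReal (1 - F s) := by
    intro s
    have h1 : μ (Ioi s) = 1 - μ (Iic s) := by
      rw [← Set.compl_Iic, measure_compl measurableSet_Iic (measure_ne_top μ _), measure_univ]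
    rw [h1, ← ofReal_cdf (μ := μ) s, ← ENNReal.ofReal_one,
      ← ENNReal.ofReal_sub _ (cdf_nonneg (μ := μ) s)]
  set c : ℝ := F y with hcdef
  have hc0 : 0 ≤ c := cdf_nonneg (μ := μ) y
  have hc1 : c < 1 := by
    by_contra h
    push_neg at h
    have : μ (Ioi y) = 0 := by rw [hIoi y]; simp [ENNReal.ofReal_eq_zero]; linarith
    exact absurd this (ne_of_gt hy)
  have htoReal : (μ (Ioi y)).toReal = 1 - c := by
    rw [hIoi y, ENNReal.toReal_ofReal (by linarith)]
  -- the null set argument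
  have hAmeas : MeasurableSet {s : ℝ | F s ≤ c} := hmeas measurableSet_Iic
  have hAy : μ {s : ℝ | F s ≤ c} = ENNReal.ofReal c :=
    measure_cdf_le_aux μ hatom hc0 hc1 ⟨y, le_refl c⟩
  have hIicy : μ (Iic y) = ENNReal.ofReal c := ((ofReal_cdf (μ := μ) y)).symm
  have hnull : μ ({s : ℝ | F s ≤ c} \ Iic y) = 0 := by
    have hsub : Iic y ⊆ {s : ℝ | F s ≤ c} := fun s hs => (cdf μ).mono hs
    have := measure_diff hsub nullMeasurableSet_Iic (by rw [hIicy]; exact ENNReal.ofReal_ne_top)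
    rw [this, hAy, hIicy, tsub_self]
  -- replace indicator of Iic y by indicator of {F ≤ c}
  have key : ∫⁻ s in Iic y, (μ (Ioi s))⁻¹ ∂μ
      = ∫⁻ s, (Iic c).indicator (fun u => (ENNReal.ofReal (1 - u))⁻¹) (F s) ∂μ := by
    rw [← lintegral_indicator measurableSet_Iic]
    apply lintegral_congr_ae
    have : ∀ᵐ s ∂μ, s ∉ {s : ℝ | F s ≤ c} \ Iic y := by
      rw [ae_iff]
      convert hnull using 2
      ext s
      simp [Set.diff_eq, mem_Iic, not_le]
    filter_upwards [this] with s hs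
    by_cases h1 : s ∈ Iic y
    · rw [indicator_of_mem h1]
      have : F s ∈ Iic c := (cdf μ).mono h1
      rw [indicator_of_mem this, hIoi s]
    · rw [indicator_of_notMem h1]
      have : F s ∉ Iic c := fun hc => hs ⟨hc, h1⟩
      rw [indicator_of_notMem this]
  rw [key]
  have hind_meas : Measurable ((Iic c).indicator (fun u => (ENNReal.ofReal (1 - u))⁻¹)) := by
    apply Measurable.indicator _ measurableSet_Iic
    exact (ENNReal.measurable_ofReal.comp (measurable_const.sub measurable_id)).inv
  rw [← lintegral_map hind_meas hmeas, map_cdf_eq_uniform μ hatom,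
    lintegral_indicator measurableSet_Iic, Measure.restrict_restrict measurableSet_Iic]
  have hset : Iic c ∩ Ioo (0:ℝ) 1 = Ioc 0 c := by
    ext x; simp only [mem_inter_iff, mem_Iic, mem_Ioo, mem_Ioc]
    constructor
    · rintro ⟨h1, h2, _⟩; exact ⟨h2, h1⟩
    · rintro ⟨h1, h2⟩; exact ⟨h2, h1, lt_of_le_of_lt h2 hc1⟩
  rw [hset, lintegral_unif_aux hc0 hc1, htoReal]

/-- Suppose the latent outcome `Y` and the censoring variable `C` are
independent and the law of `C` is atomless. Then for every `y` with `P(Y > y) > 0` and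
`P(C > y) > 0`, the weighting function `γ₀` appearing in the asymptotic representation of
Kaplan–Meier integrals is identified as the inverse censoring survival probability:
`exp(∫_{(-∞,y]} (P(Q > s))⁻¹ dν₀(s)) = (P(C > y))⁻¹`; equivalently,
`∫_{(-∞,y]} (P(Q > s))⁻¹ dν₀(s) = −log P(C > y)`, where `Q = min(Y, C)` and
`ν₀(A) = P(Q ∈ A, C < Y)` is the censored sub-distribution measure. -/
theorem gamma_zero_eq_inverse_censoring_survival
    {Ω : Type*} [MeasurableSpace Ω] (P : Measure Ω) [IsProbabilityMeasure P]
    (Y C : Ω → ℝ) (hY : Measurable Y) (hC : Measurable C)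
    (hindep : IndepFun Y C P)
    (hatomless : ∀ c : ℝ, P {ω | C ω = c} = 0)
    (y : ℝ) (hyY : 0 < P {ω | y < Y ω}) (hyC : 0 < P {ω | y < C ω}) :
    ∫⁻ s in Iic y, (P {ω | s < min (Y ω) (C ω)})⁻¹
        ∂(Measure.map (fun ω => min (Y ω) (C ω)) (P.restrict {ω | C ω < Y ω}))
      = ENNReal.ofReal (-Real.log (P {ω | y < C ω}).toReal) := by
  set Q : Ω → ℝ := fun ω => min (Y ω) (C ω) with hQdef
  have hQ : Measurable Q := hY.min hC
  set μY := Measure.map Y P with hμY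
  set μC := Measure.map C P with hμC
  set f : ℝ → ℝ≥0∞ := fun s => (P {ω | s < Q ω})⁻¹ with hfdef
  -- measurability of f
  have hanti : Antitone fun s => P {ω | s < Q ω} := by
    intro s t hst
    exact measure_mono fun ω (h : t < Q ω) => lt_of_le_of_lt hst h
  have hf : Measurable f := hanti.measurable.inv
  -- the event {C < Y} is measurable
  have hCY : MeasurableSet {ω | C ω < Y ω} := measurableSet_lt hC hY
  -- Step 1: unfold the map
  rw [show ∫⁻ s in Iic y, (P {ω | s < min (Y ω) (C ω)})⁻¹
        ∂(Measure.map (fun ω => min (Y ω) (C ω)) (P.restrict {ω | C ω < Y ω}))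
      = ∫⁻ s in Iic y, f s ∂(Measure.map Q (P.restrict {ω | C ω < Y ω})) from rfl]
  rw [setLIntegral_map measurableSet_Iic hf hQ]
  rw [Measure.restrict_restrict (hQ measurableSet_Iic)]
  -- Step 2: rewrite as integral of a function of (Y, C)
  set G : ℝ × ℝ → ℝ≥0∞ := fun p => {p : ℝ × ℝ | p.2 < p.1 ∧ p.2 ≤ y}.indicator (fun p => f p.2) p
    with hGdef
  have hGset : MeasurableSet {p : ℝ × ℝ | p.2 < p.1 ∧ p.2 ≤ y} :=
    (measurableSet_lt measurable_snd measurable_fst).inter (measurable_snd measurableSet_Iic)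
  have hGmeas : Measurable G := (hf.comp measurable_snd).indicator hGset
  have step2 : ∫⁻ ω in Q ⁻¹' Iic y ∩ {ω | C ω < Y ω}, f (Q ω) ∂P
      = ∫⁻ ω, G (Y ω, C ω) ∂P := by
    rw [← lintegral_indicator ((hQ measurableSet_Iic).inter hCY)]
    apply lintegral_congr
    intro ω
    by_cases h2 : C ω < Y ω
    · have hQC : Q ω = C ω := min_eq_right (le_of_lt h2)
      by_cases h1 : C ω ≤ y
      · have hmem : ω ∈ Q ⁻¹' Iic y ∩ {ω | C ω < Y ω} :=
          ⟨mem_preimage.mpr (mem_Iic.mpr (hQC ▸ h1)), h2⟩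
        have hmem2 : ((Y ω, C ω) : ℝ × ℝ) ∈ {p : ℝ × ℝ | p.2 < p.1 ∧ p.2 ≤ y} := ⟨h2, h1⟩
        rw [Set.indicator_of_mem hmem, hGdef]
        beta_reduce
        rw [Set.indicator_of_mem hmem2, hQC]
      · have hmem : ω ∉ Q ⁻¹' Iic y ∩ {ω | C ω < Y ω} := by
          intro hm
          exact h1 (hQC ▸ mem_Iic.mp (mem_preimage.mp hm.1))
        have hmem2 : ((Y ω, C ω) : ℝ × ℝ) ∉ {p : ℝ × ℝ | p.2 < p.1 ∧ p.2 ≤ y} := by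
          intro hm
          exact h1 hm.2
        rw [Set.indicator_of_notMem hmem, hGdef]
        beta_reduce
        rw [Set.indicator_of_notMem hmem2]
    · have hmem : ω ∉ Q ⁻¹' Iic y ∩ {ω | C ω < Y ω} := fun hm => h2 hm.2
      have hmem2 : ((Y ω, C ω) : ℝ × ℝ) ∉ {p : ℝ × ℝ | p.2 < p.1 ∧ p.2 ≤ y} := by
        intro hm
        exact h2 hm.1
      rw [Set.indicator_of_notMem hmem, hGdef]
      beta_reduce
      rw [Set.indicator_of_notMem hmem2]
  rw [step2]
  -- Step 3: product measure
  have hprod : Measure.map (fun ω => (Y ω, C ω)) P = μY.prod μC :=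
    (indepFun_iff_map_prod_eq_prod_map_map hY.aemeasurable hC.aemeasurable).mp hindep
  rw [← lintegral_map hGmeas (hY.prodMk hC), hprod]
  have : IsProbabilityMeasure μY := Measure.isProbabilityMeasure_map hY.aemeasurable
  have : IsProbabilityMeasure μC := Measure.isProbabilityMeasure_map hC.aemeasurable
  rw [lintegral_prod_symm _ hGmeas.aemeasurable]
  -- Step 4: inner integral
  have inner : ∀ b : ℝ, ∫⁻ a, G (a, b) ∂μY
      = (Iic y).indicator (fun b => f b * μY (Ioi b)) b := by
    intro b
    by_cases hb : b ≤ y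
    · have hG : ∀ a, G (a, b) = (Ioi b).indicator (fun _ => f b) a := by
        intro a
        rw [hGdef]
        beta_reduce
        by_cases ha : b < a
        · have hm1 : ((a, b) : ℝ × ℝ) ∈ {p : ℝ × ℝ | p.2 < p.1 ∧ p.2 ≤ y} := ⟨ha, hb⟩
          rw [Set.indicator_of_mem hm1, Set.indicator_of_mem (mem_Ioi.mpr ha)]
        · have hm1 : ((a, b) : ℝ × ℝ) ∉ {p : ℝ × ℝ | p.2 < p.1 ∧ p.2 ≤ y} := fun hm => ha hm.1
          rw [Set.indicator_of_notMem hm1, Set.indicator_of_notMem (fun hm => ha (mem_Ioi.mp hm))]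
      simp_rw [hG]
      rw [lintegral_indicator measurableSet_Ioi, setLIntegral_const,
        Set.indicator_of_mem (show b ∈ Iic y from hb)]
    · have hG : ∀ a, G (a, b) = 0 := by
        intro a
        rw [hGdef]
        beta_reduce
        exact Set.indicator_of_notMem (fun hm => hb hm.2) _
      simp_rw [hG]
      rw [lintegral_zero, Set.indicator_of_notMem (show b ∉ Iic y from hb)]
  simp_rw [inner]
  rw [lintegral_indicator measurableSet_Iic]
  -- Step 5: the integrand equals (μC (Ioi b))⁻¹ on Iic y
  have step5 : ∀ b ∈ Iic y, f b * μY (Ioi b) = (μC (Ioi b))⁻¹ := by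
    intro b hb
    have hsetQ : {ω | b < Q ω} = Y ⁻¹' Ioi b ∩ C ⁻¹' Ioi b := by
      ext ω
      simp only [mem_setOf_eq, mem_inter_iff, mem_preimage, mem_Ioi, lt_min_iff, hQdef]
    have hmul : P {ω | b < Q ω} = μY (Ioi b) * μC (Ioi b) := by
      rw [hsetQ, hindep.measure_inter_preimage_eq_mul _ _ measurableSet_Ioi measurableSet_Ioi,
        hμY, hμC, Measure.map_apply hY measurableSet_Ioi, Measure.map_apply hC measurableSet_Ioi]
    have hYpos : μY (Ioi b) ≠ 0 := by
      have hsub : {ω | y < Y ω} ⊆ Y ⁻¹' Ioi b := fun ω h => mem_preimage.mpr (mem_Ioi.mpr (lt_of_le_of_lt hb h))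
      have : 0 < μY (Ioi b) := by
        rw [hμY, Measure.map_apply hY measurableSet_Ioi]
        exact lt_of_lt_of_le hyY (measure_mono hsub)
      exact this.ne'
    have hYtop : μY (Ioi b) ≠ ⊤ := measure_ne_top _ _
    rw [hfdef]
    simp only [hmul]
    rw [ENNReal.mul_inv (Or.inl hYpos) (Or.inl hYtop), mul_comm (μY (Ioi b))⁻¹ _,
      mul_assoc, ENNReal.inv_mul_cancel hYpos hYtop, mul_one]
  rw [setLIntegral_congr_fun measurableSet_Iic step5]
  -- Step 6: apply the key lemma
  have hatomC : ∀ c : ℝ, μC {c} = 0 := by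
    intro c
    rw [hμC, Measure.map_apply hC (measurableSet_singleton c)]
    exact hatomless c
  have hyC' : 0 < μC (Ioi y) := by
    rw [hμC, Measure.map_apply hC measurableSet_Ioi]
    exact hyC
  rw [lintegral_inv_survival μC hatomC y hyC', hμC, Measure.map_apply hC measurableSet_Ioi]
  rfl
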